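/- Let k ≥ 4 and let N₈ = {(v,M) ∈ AGL₂(ℤ/2^kℤ) : v ≡ 0 (mod 8) and M ≡ I (mod 8)}, a finite 2-group. Then the Frattini subgroup Φ(N₈) contains N₁₆ = {(v,M) ∈ AGL₂(ℤ/2^kℤ) : v ≡ 0 (mod 16) and M ≡ I (mod 16)}. -/

import Mathlib

open scoped MatrixGroups

/-- The entry pattern identifying `AGL₂(ℤ/nℤ)` inside `GL₃(ℤ/nℤ)`:
third column equal to `(0,0,1)ᵀ`. -/
def AGLShape {n : ℕ} (g : GL (Fin 3) (ZMod n)) : Prop :=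
  (g : Matrix (Fin 3) (Fin 3) (ZMod n)) 0 2 = 0 ∧
  (g : Matrix (Fin 3) (Fin 3) (ZMod n)) 1 2 = 0 ∧
  (g : Matrix (Fin 3) (Fin 3) (ZMod n)) 2 2 = 1

/- ### Auxiliary group theory: squares lie in every maximal subgroup of a finite 2-group -/

lemma aux_sq_mem_coatom {G : Type*} [Group G] [Finite G] (hG : IsPGroup 2 G)
    (y : G) (M : Subgroup G) (hM : IsCoatom M) : y ^ 2 ∈ M := by
  haveI : Fact (Nat.Prime 2) := ⟨Nat.prime_two⟩
  haveI : Group.IsNilpotent G := hG.isNilpotent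
  haveI : M.Normal :=
    Subgroup.NormalizerCondition.normal_of_coatom M normalizerCondition_of_isNilpotent hM
  set φ := QuotientGroup.mk' M with hφ
  suffices h : φ (y ^ 2) = 1 by
    rwa [← QuotientGroup.ker_mk' M, MonoidHom.mem_ker]
  set q : G ⧸ M := φ y with hq
  have hq2 : φ (y ^ 2) = q ^ 2 := by simp [hq, map_pow]
  rw [hq2]
  have hker : M ≤ Subgroup.comap φ (Subgroup.zpowers (q ^ 2)) := by
    intro m hm
    have h1 : φ m = 1 := (QuotientGroup.eq_one_iff m).mpr hm
    simp [Subgroup.mem_comap, h1, Subgroup.one_mem]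
  have hsurj : Function.Surjective φ := QuotientGroup.mk'_surjective M
  rcases hker.lt_or_eq with hlt | heq
  · have htop : Subgroup.comap φ (Subgroup.zpowers (q ^ 2)) = ⊤ := hM.2 _ hlt
    have htop2 : Subgroup.zpowers (q ^ 2) = ⊤ := by
      rw [← Subgroup.map_comap_eq_self_of_surjective hsurj (Subgroup.zpowers (q ^ 2)), htop,
        Subgroup.map_top_of_surjective φ hsurj]
    obtain ⟨t, ht⟩ : ∃ t : ℕ, orderOf q = 2 ^ t := by
      obtain ⟨n, hn⟩ := hG y
      have hqn : q ^ (2 ^ n) = 1 := by rw [hq, ← map_pow, hn, map_one]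
      exact (Nat.dvd_prime_pow Nat.prime_two).mp (orderOf_dvd_of_pow_eq_one hqn) |>.imp
        fun t ht => ht.2
    have hcard : orderOf (q ^ 2) = Nat.card (G ⧸ M) := by
      rw [← Nat.card_zpowers, htop2]; exact Subgroup.card_top
    have h1 : orderOf (q ^ 2) ∣ orderOf q := orderOf_pow_dvd 2
    have h2 : orderOf q ∣ Nat.card (G ⧸ M) := orderOf_dvd_natCard q
    have heqo : orderOf (q ^ 2) = orderOf q :=
      Nat.dvd_antisymm h1 (hcard ▸ h2)
    rw [orderOf_pow] at heqo
    have hpos : orderOf q ≠ 0 := (orderOf_pos q).ne'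
    have hgcd : Nat.gcd (orderOf q) 2 = 1 := by
      rcases Nat.div_eq_self.mp heqo with h | h
      · exact absurd h hpos
      · exact h
    have h2dvd : ¬ (2 ∣ orderOf q) := by
      intro hd
      have h21 : (2 : ℕ) ∣ 1 := hgcd ▸ Nat.dvd_gcd hd dvd_rfl
      omega
    have ht0 : t = 0 := by
      by_contra h0
      exact h2dvd (ht ▸ dvd_pow_self 2 h0)
    have hq1 : q = 1 := orderOf_eq_one_iff.mp (by rw [ht, ht0, pow_zero])
    rw [hq1, one_pow]
  · have hbot : Subgroup.map φ M ≤ ⊥ := by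
      rintro x ⟨m, hm, rfl⟩
      exact (QuotientGroup.eq_one_iff m).mpr hm
    have hmem : q ^ 2 ∈ (⊥ : Subgroup (G ⧸ M)) := by
      have h := Subgroup.mem_zpowers (q ^ 2)
      rw [← Subgroup.map_comap_eq_self_of_surjective hsurj (Subgroup.zpowers (q ^ 2)),
        ← heq] at h
      exact hbot h
    exact Subgroup.mem_bot.mp hmem

/- ### Auxiliary facts about matrices over `ZMod n` congruent to `1` mod `m` -/

lemma aux_cast_zero_iff {n m : ℕ} [NeZero n] (h : m ∣ n) (a : ZMod n) :
    ZMod.castHom h (ZMod m) a = 0 ↔ ∃ b : ZMod n, a = (m : ZMod n) * b := by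
  haveI : NeZero m := ⟨by rintro rfl; exact (NeZero.ne n) (zero_dvd_iff.mp h)⟩
  constructor
  · intro h0
    rw [ZMod.castHom_apply, ← ZMod.natCast_val, ZMod.natCast_eq_zero_iff] at h0
    obtain ⟨c, hc⟩ := h0
    refine ⟨(c : ZMod n), ?_⟩
    conv_lhs => rw [← ZMod.natCast_zmod_val a]
    rw [hc]; push_cast; ring
  · rintro ⟨b, rfl⟩
    rw [map_mul, map_natCast, ZMod.natCast_self, zero_mul]

lemma aux_exists_rep {n m : ℕ} [NeZero n] (h : m ∣ n) (x : Matrix (Fin 3) (Fin 3) (ZMod n))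
    (hx : x.map (ZMod.castHom h (ZMod m)) = 1) :
    ∃ C : Matrix (Fin 3) (Fin 3) (ZMod n),
      x = 1 + (m : ZMod n) • C ∧
      ∀ i j, x i j = (1 : Matrix (Fin 3) (Fin 3) (ZMod n)) i j → C i j = 0 := by
  have he : ∀ i j, ∃ b : ZMod n,
      x i j - (1 : Matrix (Fin 3) (Fin 3) (ZMod n)) i j = (m : ZMod n) * b := by
    intro i j
    apply (aux_cast_zero_iff h _).mp
    have h1 : (x.map (ZMod.castHom h (ZMod m))) i j
        = (1 : Matrix (Fin 3) (Fin 3) (ZMod m)) i j := by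
      rw [hx]
    rw [Matrix.map_apply] at h1
    rw [map_sub, h1]
    rcases eq_or_ne i j with rfl | hij
    · simp only [Matrix.one_apply_eq, map_one, sub_self]
    · simp only [Matrix.one_apply_ne hij, map_zero, sub_zero]
  choose b hb using he
  refine ⟨fun i j => if x i j = (1 : Matrix (Fin 3) (Fin 3) (ZMod n)) i j then 0 else b i j,
    ?_, ?_⟩
  · ext i j
    by_cases hij : x i j = (1 : Matrix (Fin 3) (Fin 3) (ZMod n)) i j
    · simp [Matrix.add_apply, Matrix.smul_apply, hij]; exact (smul_eq_mul (m : ZMod n) (if x i j = (1 : Matrix (Fin 3) (Fin 3) (ZMod n)) i j then 0 else b i j)).trans (by simp [hij])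
    · have h2 := hb i j
      rw [sub_eq_iff_eq_add'] at h2
      simp only [Matrix.add_apply, Matrix.smul_apply, hij, if_neg, smul_eq_mul]
      rw [h2]; simp [hij]; exact ((smul_eq_mul (m : ZMod n) (if x i j = (1 : Matrix (Fin 3) (Fin 3) (ZMod n)) i j then 0 else b i j)).trans (by simp [hij])).symm
  · intro i j hij; simp [hij]

lemma aux_map_one_of_rep {n m : ℕ} [NeZero n] [NeZero m] (h : m ∣ n)
    (C : Matrix (Fin 3) (Fin 3) (ZMod n)) :
    ((1 + (m : ZMod n) • C : Matrix (Fin 3) (Fin 3) (ZMod n))).map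
      (ZMod.castHom h (ZMod m)) = 1 := by
  ext i j
  rw [Matrix.map_apply, Matrix.add_apply, Matrix.smul_apply]
  rw [smul_eq_mul, map_add, map_mul, map_natCast, ZMod.natCast_self, zero_mul, add_zero]
  rcases eq_or_ne i j with rfl | hij
  · simp only [Matrix.one_apply_eq, map_one]
  · simp only [Matrix.one_apply_ne hij, map_zero]

/- ### A Newton-type iteration producing square roots -/

section Iter
variable {R : Type*} [CommRing R]

/-- Newton-type iteration for solving `B + 4 B² = A`. -/
noncomputable def sqrtSeq (A : Matrix (Fin 3) (Fin 3) R) : ℕ → Matrix (Fin 3) (Fin 3) R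
  | 0 => 0
  | (j + 1) => A - (4 : R) • (sqrtSeq A j * sqrtSeq A j)

lemma sqrtSeq_col (A : Matrix (Fin 3) (Fin 3) R) (hA : ∀ i, A i 2 = 0) :
    ∀ j i, sqrtSeq A j i 2 = 0 := by
  intro j
  induction j with
  | zero => intro i; simp [sqrtSeq]
  | succ j ih =>
    intro i
    simp only [sqrtSeq, Matrix.sub_apply, Matrix.smul_apply, Matrix.mul_apply]
    rw [hA i]
    simp [ih]

lemma sqrtSeq_diff (A : Matrix (Fin 3) (Fin 3) R) :
    ∀ j, ∃ F, sqrtSeq A (j + 1) - sqrtSeq A j = ((4 : R) ^ j) • F := by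
  intro j
  induction j with
  | zero => exact ⟨A, by simp [sqrtSeq]⟩
  | succ j ih =>
    obtain ⟨F, hF⟩ := ih
    set B1 := sqrtSeq A (j + 1) with hB1
    set B0 := sqrtSeq A j with hB0
    refine ⟨-(B1 * F + F * B0), ?_⟩
    have h1 : sqrtSeq A (j + 2) - sqrtSeq A (j + 1)
        = -((4 : R) • (B1 * B1 - B0 * B0)) := by
      show (A - (4 : R) • (B1 * B1)) - (A - (4 : R) • (B0 * B0)) = _
      rw [smul_sub]; abel
    have h2 : B1 * B1 - B0 * B0 = B1 * (B1 - B0) + (B1 - B0) * B0 := by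
      rw [mul_sub, sub_mul]; abel
    rw [h1, h2, hF, mul_smul_comm, smul_mul_assoc, ← smul_add, smul_smul, ← smul_neg]
    congr 1
    ring

lemma sqrtSeq_eq (A : Matrix (Fin 3) (Fin 3) R) (j : ℕ) :
    ∃ F, sqrtSeq A j + (4 : R) • (sqrtSeq A j * sqrtSeq A j) - A = ((4 : R) ^ j) • F := by
  obtain ⟨F, hF⟩ := sqrtSeq_diff A j
  refine ⟨-F, ?_⟩
  have h : sqrtSeq A j + (4 : R) • (sqrtSeq A j * sqrtSeq A j) - A
      = -(sqrtSeq A (j + 1) - sqrtSeq A j) := by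
    show _ = -((A - (4 : R) • (sqrtSeq A j * sqrtSeq A j)) - sqrtSeq A j)
    abel
  rw [h, hF, smul_neg]

/-- Binomial squaring step for matrices `1 + 2^m C`. -/
lemma pow_two_step {m : ℕ} (hm : 1 ≤ m) (C : Matrix (Fin 3) (Fin 3) R) :
    ∃ C', (1 + ((2 ^ m : ℕ) : R) • C) ^ 2 = 1 + ((2 ^ (m + 1) : ℕ) : R) • C' := by
  refine ⟨C + ((2 ^ (m - 1) : ℕ) : R) • (C * C), ?_⟩
  have hexp : (2 ^ (m + 1) : ℕ) * (2 ^ (m - 1) : ℕ) = (2 ^ m : ℕ) * (2 ^ m : ℕ) := by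
    rw [← pow_add, ← pow_add]
    congr 1
    omega
  rw [sq, add_mul, mul_add, mul_add, one_mul, mul_one]
  simp only [one_mul, mul_smul_comm, smul_mul_assoc, smul_smul, smul_add]
  push_cast
  have hexp' : (2 : R) ^ (m + 1) * (2 : R) ^ (m - 1) = (2 : R) ^ m * (2 : R) ^ m := by
    have h3 := congrArg (Nat.cast : ℕ → R) hexp
    push_cast at h3
    exact h3
  have h2m' : (2 : R) ^ (m + 1) = (2 : R) ^ m + (2 : R) ^ m := by
    rw [pow_succ]; ring
  rw [hexp', h2m', add_smul]
  abel

lemma pow_two_pow (C : Matrix (Fin 3) (Fin 3) R) (t : ℕ) :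
    ∃ C', (1 + ((2 ^ 3 : ℕ) : R) • C) ^ (2 ^ t) = 1 + ((2 ^ (3 + t) : ℕ) : R) • C' := by
  induction t with
  | zero => exact ⟨C, by norm_num⟩
  | succ t ih =>
    obtain ⟨C', hC'⟩ := ih
    obtain ⟨C'', hC''⟩ := pow_two_step (by omega : 1 ≤ 3 + t) C'
    refine ⟨C'', ?_⟩
    rw [pow_succ 2 t, pow_mul, hC', hC'', add_assoc]
end Iter

/-- Let `k ≥ 4` and let `N₈ = {(v,M) ∈ AGL₂(ℤ/2^kℤ) : v ≡ 0 (mod 8), M ≡ I (mod 8)}`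
(here given as a subgroup `N` with exactly that carrier, i.e. the AGL-shaped matrices
reducing to the identity mod 8).  Then the Frattini subgroup `Φ(N₈)` contains
`N₁₆ = {(v,M) ∈ AGL₂(ℤ/2^kℤ) : v ≡ 0 (mod 16), M ≡ I (mod 16)}`. -/
theorem stmt_1 (k : ℕ) (hk : 4 ≤ k)
    (N : Subgroup (GL (Fin 3) (ZMod (2 ^ k))))
    (hN : ∀ g : GL (Fin 3) (ZMod (2 ^ k)), g ∈ N ↔
      (AGLShape g ∧
        (g : Matrix (Fin 3) (Fin 3) (ZMod (2 ^ k))).map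
          (ZMod.castHom
            (by have h := pow_dvd_pow 2 (show 3 ≤ k by omega); norm_num at h; exact h :
              (8 : ℕ) ∣ 2 ^ k) (ZMod 8)) = 1)) :
    ∀ g : GL (Fin 3) (ZMod (2 ^ k)), AGLShape g →
      (g : Matrix (Fin 3) (Fin 3) (ZMod (2 ^ k))).map
        (ZMod.castHom
          (by have h := pow_dvd_pow 2 (show 4 ≤ k by omega); norm_num at h; exact h :
            (16 : ℕ) ∣ 2 ^ k) (ZMod 16)) = 1 →
      ∀ hg : g ∈ N, (⟨g, hg⟩ : N) ∈ frattini N := by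
  haveI : NeZero (2 ^ k) := ⟨pow_ne_zero k two_ne_zero⟩
  intro g hshape hmap16 hg
  set R := ZMod (2 ^ k) with hR
  -- `N` is a finite 2-group
  have hP : IsPGroup 2 ↥N := by
    intro z
    refine ⟨k, ?_⟩
    obtain ⟨-, hmap8⟩ := (hN z.1).mp z.2
    obtain ⟨C, hC, -⟩ := aux_exists_rep _ _ hmap8
    obtain ⟨C', hC'⟩ := pow_two_pow (R := R) C k
    have h8 : ((8 : ℕ) : R) = ((2 ^ 3 : ℕ) : R) := by norm_num
    have hcast : ((2 ^ (3 + k) : ℕ) : R) = 0 :=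
      (ZMod.natCast_eq_zero_iff _ _).mpr (pow_dvd_pow 2 (by omega))
    have hz : ((z.1 : GL (Fin 3) R) : Matrix (Fin 3) (Fin 3) R) ^ (2 ^ k) = 1 := by
      rw [hC, h8, hC', hcast, zero_smul, add_zero]
    apply Subtype.ext
    apply Units.ext
    rw [SubmonoidClass.coe_pow, Units.val_pow_eq_pow_val]
    exact hz
  -- construct a square root of `g` inside `N`
  obtain ⟨C, hC, hC0⟩ := aux_exists_rep _ _ hmap16
  have hCcol : ∀ i, C i 2 = 0 := by
    intro i
    apply hC0
    fin_cases i
    · show (g : Matrix (Fin 3) (Fin 3) R) 0 2 = (1 : Matrix (Fin 3) (Fin 3) R) 0 2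
      rw [hshape.1, Matrix.one_apply_ne (by decide)]
    · show (g : Matrix (Fin 3) (Fin 3) R) 1 2 = (1 : Matrix (Fin 3) (Fin 3) R) 1 2
      rw [hshape.2.1, Matrix.one_apply_ne (by decide)]
    · show (g : Matrix (Fin 3) (Fin 3) R) 2 2 = (1 : Matrix (Fin 3) (Fin 3) R) 2 2
      rw [hshape.2.2, Matrix.one_apply_eq]
  set B := sqrtSeq C k with hB
  have hBcol : ∀ i, B i 2 = 0 := sqrtSeq_col C hCcol k
  obtain ⟨F, hF⟩ := sqrtSeq_eq C k
  set hmat : Matrix (Fin 3) (Fin 3) R := 1 + ((8 : ℕ) : R) • B with hhmat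
  have hnil : IsNilpotent (((8 : ℕ) : R) • B) := by
    refine ⟨k, ?_⟩
    rw [smul_pow]
    have h0 : (((8 : ℕ) : R)) ^ k = 0 := by
      rw [← Nat.cast_pow, ZMod.natCast_eq_zero_iff]
      have h8k : (8 : ℕ) ^ k = 2 ^ (3 * k) := by
        rw [pow_mul]; norm_num
      rw [h8k]
      exact pow_dvd_pow 2 (by omega)
    rw [h0, zero_smul]
  have hu : IsUnit hmat := hnil.isUnit_one_add
  -- the square of the square root is `g`
  have hsq : hmat * hmat = (g : Matrix (Fin 3) (Fin 3) R) := by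
    have h16 : ((16 : ℕ) : R) = (16 : R) := by norm_num
    rw [hC, h16]
    have expand : hmat * hmat = 1 + (16 : R) • (B + (4 : R) • (B * B)) := by
      rw [hhmat, mul_add, add_mul, add_mul, one_mul, mul_one]
      simp only [one_mul, mul_smul_comm, smul_mul_assoc, smul_smul, smul_add]
      have c8 : ((8 : ℕ) : R) = (8 : R) := by norm_num
      rw [c8]
      have e1 : (8 : R) * 8 = 16 * 4 := by norm_num
      have e2 : (8 : R) + 8 = 16 := by norm_num
      rw [e1, ← e2, add_smul]
      abel
    rw [expand]
    have hzero : (16 : R) • (B + (4 : R) • (B * B)) - (16 : R) • C = 0 := by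
      rw [← smul_sub]
      have h4 : B + (4 : R) • (B * B) - C = ((4 : R) ^ k) • F := hF
      have hrw : B + (4 : R) • (B * B) - C = ((4 : R) ^ k) • F := h4
      rw [hrw, smul_smul]
      have hc : (16 : R) * (4 : R) ^ k = 0 := by
        have : (16 : R) * (4 : R) ^ k = ((16 * 4 ^ k : ℕ) : R) := by rw [Nat.cast_mul, Nat.cast_pow]; norm_num
        rw [this, ZMod.natCast_eq_zero_iff]
        have : (16 : ℕ) * 4 ^ k = 2 ^ (4 + 2 * k) := by
          rw [pow_add, pow_mul]; norm_num
        rw [this]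
        exact pow_dvd_pow 2 (by omega)
      rw [hc, zero_smul]
    have := sub_eq_zero.mp hzero
    rw [this]
  -- the square root lies in `N`
  have humem : hu.unit ∈ N := by
    rw [hN]
    constructor
    · refine ⟨?_, ?_, ?_⟩ <;>
      · show (hu.unit : Matrix (Fin 3) (Fin 3) R) _ _ = _
        rw [hu.unit_spec, hhmat, Matrix.add_apply, Matrix.smul_apply]
        first
          | rw [hBcol, Matrix.one_apply_ne (by decide)]; simp
          | rw [hBcol, Matrix.one_apply_eq]; simp
    · show ((hu.unit : GL (Fin 3) R) : Matrix (Fin 3) (Fin 3) R).map _ = 1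
      rw [hu.unit_spec, hhmat]
      exact aux_map_one_of_rep _ B
  -- conclusion: `⟨g, hg⟩` is the square of an element of `N`, hence in every maximal
  -- subgroup, hence in the Frattini subgroup
  set y : ↥N := ⟨hu.unit, humem⟩ with hy
  have hysq : y ^ 2 = (⟨g, hg⟩ : N) := by
    apply Subtype.ext
    apply Units.ext
    rw [SubmonoidClass.coe_pow, Units.val_pow_eq_pow_val, sq]
    show (hu.unit : Matrix (Fin 3) (Fin 3) R) * (hu.unit : Matrix (Fin 3) (Fin 3) R) = _
    rw [hu.unit_spec]
    exact hsq
  rw [← hysq]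
  show y ^ 2 ∈ ⨅ M ∈ {H : Subgroup ↥N | IsCoatom H}, M
  refine Subgroup.mem_iInf.mpr fun M => Subgroup.mem_iInf.mpr fun hM => ?_
  exact aux_sq_mem_coatom hP y M hM
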